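/- Let N = (B, E, pre, post) be a finite Petri net with an injective labeling φ : B → ℕ such that every condition b ∈ B lies in pre(e) or post(e) for some event e. Let P₁, P₂ ∈ ℕ[X, Y] with τ(P₁) ∩ τ(P₂) = ∅. Then P(N, φ) = P₁ · P₂ if and only if there exist finite Petri nets N₁ = (B₁, E₁, pre₁, post₁) and N₂ = (B₂, E₂, pre₂, post₂) with injective labelings φ₁ : B₁ → ℕ and φ₂ : B₂ → ℕ having disjoint images, in which every condition lies in some pre- or post-set, with P(N₁, φ₁) = P₁ and P(N₂, φ₂) = P₂, together with bijections β : B ≃ B₁ ⊕ B₂ and η : E ≃ {(o₁, o₂) ∈ Option E₁ × Option E₂ : (o₁, o₂) ≠ (none, none)} such that: (i) φ b = (Sum.elim φ₁ φ₂) (β b) for all b ∈ B; (ii) for every e ∈ E, the image of pre(e) under β equals the union of the images of pre₁(e₁) (under inl) and pre₂(e₂) (under inr), where (e₁, e₂) are the components of η(e) and a component equal to none contributes the empty set; and (iii) the same compatibility holds with post in place of pre. (This is the decomposition, i.e. parallelization, criterion for Petri nets via their polynomials.) -/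

import Mathlib

/-- `tau k` is the set of positions of 1-bits in the binary expansion of `k`. -/
def tau (k : ℕ) : Set ℕ := {t | Nat.testBit k t = true}

/-- For `P ∈ ℕ[X, Y]`, `tauMv P` is the union of `tau i ∪ tau j` over all monomials
`X^i Y^j` in the support of `P`. -/
def tauMv (P : MvPolynomial (Fin 2) ℕ) : Set ℕ :=
  ⋃ d ∈ P.support, (tau (d 0) ∪ tau (d 1))

/-- The Petri net polynomial
`P(N, φ) = 1 + ∑_{e : E} X ^ (∑_{b ∈ pre e} 2 ^ φ b) * Y ^ (∑_{b ∈ post e} 2 ^ φ b)`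
in `ℕ[X, Y]`, realized as `MvPolynomial (Fin 2) ℕ` with `X = X 0`, `Y = X 1`. -/
noncomputable def petriPoly {B E : Type*} [Fintype E]
    (pre post : E → Finset B) (φ : B → ℕ) : MvPolynomial (Fin 2) ℕ :=
  1 + ∑ e : E, MvPolynomial.X 0 ^ (∑ b ∈ pre e, 2 ^ φ b) *
      MvPolynomial.X 1 ^ (∑ b ∈ post e, 2 ^ φ b)

namespace PetriAux
open Finset MvPolynomial

/-! ### bits -/

def bits (n : ℕ) : Finset ℕ := n.bitIndices.toFinset

@[simp] lemma sum_bits (n : ℕ) : ∑ i ∈ bits n, 2 ^ i = n :=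
  Finset.twoPowSum_toFinset_bitIndices n

@[simp] lemma bits_sum (s : Finset ℕ) : bits (∑ i ∈ s, 2 ^ i) = s :=
  Finset.toFinset_bitIndices_twoPowSum s

@[simp] lemma bits_zero : bits 0 = ∅ := by simpa using bits_sum ∅

lemma bits_eq_empty {n : ℕ} (h : bits n = ∅) : n = 0 := by
  have := sum_bits n; rw [h] at this; simpa using this.symm

lemma mem_bits_iff_testBit {n t : ℕ} : t ∈ bits n ↔ Nat.testBit n t = true := by
  induction n using Nat.binaryRec generalizing t with
  | zero => simp [bits]
  | bit b m ih =>
    cases t with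
    | zero =>
      rw [Nat.testBit_bit_zero]
      cases b <;>
        simp [bits, Nat.bitIndices_bit_false, Nat.bitIndices_bit_true]
    | succ t =>
      rw [Nat.testBit_bit_succ, ← ih]
      cases b <;>
        simp [bits, Nat.bitIndices_bit_false, Nat.bitIndices_bit_true, add_left_inj]

lemma tau_eq_bits (n : ℕ) : tau n = ↑(bits n) := by
  ext t; simp [tau, mem_bits_iff_testBit]

lemma sum_two_pow_image {α : Type*} (s : Finset α) (ψ : α → ℕ)
    (hinj : Function.Injective ψ) : ∑ b ∈ s, 2 ^ ψ b = ∑ t ∈ s.image ψ, 2 ^ t := by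
  rw [Finset.sum_image (fun x _ y _ h => hinj h)]

lemma bits_sum_two_pow {α : Type*} (s : Finset α) (ψ : α → ℕ)
    (hinj : Function.Injective ψ) : bits (∑ b ∈ s, 2 ^ ψ b) = s.image ψ := by
  rw [sum_two_pow_image s ψ hinj, bits_sum]

lemma sum_two_pow_injective {α : Type*} (ψ : α → ℕ) (hinj : Function.Injective ψ)
    {s t : Finset α} (h : ∑ b ∈ s, 2 ^ ψ b = ∑ b ∈ t, 2 ^ ψ b) : s = t := by
  classical
  have := congrArg bits h
  rw [bits_sum_two_pow s ψ hinj, bits_sum_two_pow t ψ hinj] at this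
  exact Finset.image_injective hinj this

lemma bits_add_of_disjoint {a b : ℕ} (h : Disjoint (bits a) (bits b)) :
    bits (a + b) = bits a ∪ bits b := by
  classical
  conv_lhs => rw [← sum_bits a, ← sum_bits b, ← Finset.sum_union h]
  rw [bits_sum]

/-- uniqueness of carry-free decompositions -/
lemma add_cancel_bits {S T : Set ℕ} (hST : Disjoint S T) {a b a' b' : ℕ}
    (ha : ↑(bits a) ⊆ S) (hb : ↑(bits b) ⊆ T) (ha' : ↑(bits a') ⊆ S) (hb' : ↑(bits b') ⊆ T)
    (h : a + b = a' + b') : a = a' ∧ b = b' := by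
  classical
  have dab : Disjoint (bits a) (bits b) := by
    rw [← Finset.disjoint_coe]
    exact hST.mono ha hb
  have dab' : Disjoint (bits a') (bits b') := by
    rw [← Finset.disjoint_coe]
    exact hST.mono ha' hb'
  have hu : bits a ∪ bits b = bits a' ∪ bits b' := by
    rw [← bits_add_of_disjoint dab, ← bits_add_of_disjoint dab', h]
  have hAA : bits a = bits a' := by
    apply Finset.ext; intro t
    constructor
    · intro ht
      have h2 : t ∈ bits a' ∪ bits b' := by rw [← hu]; exact Finset.mem_union_left _ ht
      rcases Finset.mem_union.1 h2 with h1 | h1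
      · exact h1
      · exact absurd (hb' h1) (Set.disjoint_left.1 hST (ha ht))
    · intro ht
      have h2 : t ∈ bits a ∪ bits b := by rw [hu]; exact Finset.mem_union_left _ ht
      rcases Finset.mem_union.1 h2 with h1 | h1
      · exact h1
      · exact absurd (hb h1) (Set.disjoint_left.1 hST (ha' ht))
  have haa : a = a' := by rw [← sum_bits a, ← sum_bits a', hAA]
  exact ⟨haa, by omega⟩

/-! ### monomial exponents over Fin 2 -/

abbrev D := Fin 2 →₀ ℕ

noncomputable def dm (i j : ℕ) : D := Finsupp.single 0 i + Finsupp.single 1 j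

@[simp] lemma dm_apply0 (i j : ℕ) : dm i j 0 = i := by
  simp [dm, Finsupp.single_apply]

@[simp] lemma dm_apply1 (i j : ℕ) : dm i j 1 = j := by
  simp [dm, Finsupp.single_apply]

lemma dm_self (d : D) : dm (d 0) (d 1) = d := by
  ext x
  fin_cases x
  · simp
  · simp

@[simp] lemma dm_zero : dm 0 0 = 0 := by simp [dm]

lemma dm_add (i j i' j' : ℕ) : dm (i + i') (j + j') = dm i j + dm i' j' := by
  ext x
  fin_cases x <;> simp

lemma dm_eq_iff {i j i' j' : ℕ} : dm i j = dm i' j' ↔ i = i' ∧ j = j' := by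
  constructor
  · intro h
    exact ⟨by simpa using DFunLike.congr_fun h 0, by simpa using DFunLike.congr_fun h 1⟩
  · rintro ⟨rfl, rfl⟩; rfl

lemma dm_eq_zero_iff {i j : ℕ} : dm i j = 0 ↔ i = 0 ∧ j = 0 := by
  rw [← dm_zero, dm_eq_iff]

/-- the set of bit positions occurring in a monomial exponent -/
def mbits (d : D) : Finset ℕ := bits (d 0) ∪ bits (d 1)

@[simp] lemma mbits_zero : mbits 0 = ∅ := by simp [mbits]

lemma mbits_subset_tauMv {P : MvPolynomial (Fin 2) ℕ} {d : D} (hd : d ∈ P.support) :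
    ↑(mbits d) ⊆ tauMv P := by
  intro t ht
  rw [tauMv]
  refine Set.mem_iUnion₂.2 ⟨d, hd, ?_⟩
  have h' : t ∈ bits (d 0) ∪ bits (d 1) := by exact_mod_cast ht
  rw [tau_eq_bits, tau_eq_bits]
  rcases Finset.mem_union.1 h' with h | h
  · exact Or.inl (by exact_mod_cast h)
  · exact Or.inr (by exact_mod_cast h)

lemma bits0_subset {d : D} {S : Set ℕ} (h : ↑(mbits d) ⊆ S) : ↑(bits (d 0)) ⊆ S :=
  fun t ht => h (by rw [mbits]; exact_mod_cast Finset.mem_union_left _ (by exact_mod_cast ht))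

lemma bits1_subset {d : D} {S : Set ℕ} (h : ↑(mbits d) ⊆ S) : ↑(bits (d 1)) ⊆ S :=
  fun t ht => h (by rw [mbits]; exact_mod_cast Finset.mem_union_right _ (by exact_mod_cast ht))

/-! ### coefficients of petriPoly -/

lemma petriPoly_eq {B E : Type*} [Fintype E] (pre post : E → Finset B) (φ : B → ℕ) :
    petriPoly pre post φ = 1 + ∑ e : E,
      MvPolynomial.monomial (dm (∑ b ∈ pre e, 2 ^ φ b) (∑ b ∈ post e, 2 ^ φ b)) 1 := by
  rw [petriPoly]
  congr 1
  refine Finset.sum_congr rfl fun e _ => ?_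
  rw [X_pow_eq_monomial, X_pow_eq_monomial, monomial_mul, mul_one, dm]

/-- the monomial exponent of an event -/
noncomputable def dmE {B E : Type*} (pre post : E → Finset B) (φ : B → ℕ) (e : E) : D :=
  dm (∑ b ∈ pre e, 2 ^ φ b) (∑ b ∈ post e, 2 ^ φ b)

lemma coeff_petriPoly {B E : Type*} [Fintype E] (pre post : E → Finset B) (φ : B → ℕ)
    (d : D) : MvPolynomial.coeff d (petriPoly pre post φ) =
      (if d = 0 then 1 else 0) + ∑ e : E, (if dmE pre post φ e = d then 1 else 0) := by
  classical
  rw [petriPoly_eq, MvPolynomial.coeff_add, MvPolynomial.coeff_one]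
  congr 1
  · simp [eq_comm]
  · rw [MvPolynomial.coeff_sum]
    exact Finset.sum_congr rfl fun e _ => by rw [MvPolynomial.coeff_monomial]; rfl

/-! ### coefficients of a product with disjoint tau -/

lemma coeff_mul_of_disjoint {P₁ P₂ : MvPolynomial (Fin 2) ℕ}
    (hdis : Disjoint (tauMv P₁) (tauMv P₂)) {a b : D}
    (ha : ↑(mbits a) ⊆ tauMv P₁) (hb : ↑(mbits b) ⊆ tauMv P₂) :
    MvPolynomial.coeff (a + b) (P₁ * P₂) =
      MvPolynomial.coeff a P₁ * MvPolynomial.coeff b P₂ := by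
  classical
  rw [MvPolynomial.coeff_mul]
  refine Finset.sum_eq_single_of_mem (a, b) (by rw [Finset.HasAntidiagonal.mem_antidiagonal]) ?_
  rintro ⟨u, v⟩ huv hne
  by_contra hc
  have hu : u ∈ P₁.support := by
    rw [MvPolynomial.mem_support_iff]; intro h0; apply hc; simp [h0]
  have hv : v ∈ P₂.support := by
    rw [MvPolynomial.mem_support_iff]; intro h0; apply hc; simp [h0]
  have hus := mbits_subset_tauMv hu
  have hvs := mbits_subset_tauMv hv
  rw [Finset.HasAntidiagonal.mem_antidiagonal] at huv
  have h0 : u 0 + v 0 = a 0 + b 0 := by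
    have := DFunLike.congr_fun huv 0; simpa using this
  have h1 : u 1 + v 1 = a 1 + b 1 := by
    have := DFunLike.congr_fun huv 1; simpa using this
  have e0 := add_cancel_bits hdis (bits0_subset hus) (bits0_subset hvs)
    (bits0_subset ha) (bits0_subset hb) h0
  have e1 := add_cancel_bits hdis (bits1_subset hus) (bits1_subset hvs)
    (bits1_subset ha) (bits1_subset hb) h1
  apply hne
  have hu' : u = a := by rw [← dm_self u, ← dm_self a, e0.1, e1.1]
  have hv' : v = b := by rw [← dm_self v, ← dm_self b, e0.2, e1.2]
  rw [hu', hv']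

lemma support_mul_bits {P₁ P₂ : MvPolynomial (Fin 2) ℕ}
    (hdis : Disjoint (tauMv P₁) (tauMv P₂)) {d : D} (hd : d ∈ (P₁ * P₂).support) :
    ↑(mbits d) ⊆ tauMv P₁ ∪ tauMv P₂ := by
  classical
  rw [MvPolynomial.mem_support_iff, MvPolynomial.coeff_mul] at hd
  obtain ⟨⟨u, v⟩, huv, hne⟩ := Finset.exists_ne_zero_of_sum_ne_zero hd
  have hu : u ∈ P₁.support := by
    rw [MvPolynomial.mem_support_iff]; intro h0; apply hne; simp [h0]
  have hv : v ∈ P₂.support := by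
    rw [MvPolynomial.mem_support_iff]; intro h0; apply hne; simp [h0]
  have hus := mbits_subset_tauMv hu
  have hvs := mbits_subset_tauMv hv
  rw [Finset.HasAntidiagonal.mem_antidiagonal] at huv
  subst huv
  intro t ht
  rw [mbits] at ht
  have hc0 : (u + v) 0 = u 0 + v 0 := rfl
  have hc1 : (u + v) 1 = u 1 + v 1 := rfl
  rcases Finset.mem_union.1 (by exact_mod_cast ht) with h | h
  · rw [hc0, bits_add_of_disjoint (by
      rw [← Finset.disjoint_coe]
      exact hdis.mono (bits0_subset hus) (bits0_subset hvs))] at h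
    rcases Finset.mem_union.1 h with h | h
    · exact Or.inl (bits0_subset hus h)
    · exact Or.inr (bits0_subset hvs h)
  · rw [hc1, bits_add_of_disjoint (by
      rw [← Finset.disjoint_coe]
      exact hdis.mono (bits1_subset hus) (bits1_subset hvs))] at h
    rcases Finset.mem_union.1 h with h | h
    · exact Or.inl (bits1_subset hus h)
    · exact Or.inr (bits1_subset hvs h)

/-! ### backward direction -/

lemma sum_split_of_image {B B₁ B₂ : Type*} (φ : B → ℕ) (φ₁ : B₁ → ℕ) (φ₂ : B₂ → ℕ)
    (β : B ≃ B₁ ⊕ B₂) (hβφ : ∀ b, φ b = Sum.elim φ₁ φ₂ (β b))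
    (s : Finset B) (A₁ : Finset B₁) (A₂ : Finset B₂)
    (h : ⇑β '' ↑s = Sum.inl '' ↑A₁ ∪ Sum.inr '' ↑A₂) :
    ∑ b ∈ s, 2 ^ φ b = ∑ a ∈ A₁, 2 ^ φ₁ a + ∑ a ∈ A₂, 2 ^ φ₂ a := by
  classical
  have hfin : s.image β = A₁.image Sum.inl ∪ A₂.image Sum.inr := by
    apply Finset.coe_injective
    rw [Finset.coe_union, Finset.coe_image, Finset.coe_image, Finset.coe_image, h]
  have hdisj : Disjoint (A₁.image (Sum.inl : B₁ → B₁ ⊕ B₂)) (A₂.image Sum.inr) := by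
    rw [Finset.disjoint_left]
    rintro x hx hx'
    obtain ⟨a, _, rfl⟩ := Finset.mem_image.1 hx
    obtain ⟨a', _, h'⟩ := Finset.mem_image.1 hx'
    exact Sum.inl_ne_inr h'.symm
  calc ∑ b ∈ s, 2 ^ φ b = ∑ b ∈ s, 2 ^ Sum.elim φ₁ φ₂ (β b) := by
        refine Finset.sum_congr rfl fun b _ => by rw [hβφ]
    _ = ∑ x ∈ s.image β, 2 ^ Sum.elim φ₁ φ₂ x := by
        rw [Finset.sum_image (fun x _ y _ h => β.injective h)]
    _ = ∑ x ∈ A₁.image Sum.inl, 2 ^ Sum.elim φ₁ φ₂ x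
        + ∑ x ∈ A₂.image Sum.inr, 2 ^ Sum.elim φ₁ φ₂ x := by
        rw [hfin, Finset.sum_union hdisj]
    _ = ∑ a ∈ A₁, 2 ^ φ₁ a + ∑ a ∈ A₂, 2 ^ φ₂ a := by
        rw [Finset.sum_image (fun x _ y _ h => Sum.inl_injective h),
          Finset.sum_image (fun x _ y _ h => Sum.inr_injective h)]
        simp

lemma backward_eq {B E B₁ E₁ B₂ E₂ : Type*} [Fintype E] [Fintype E₁] [Fintype E₂]
    (pre post : E → Finset B) (φ : B → ℕ)
    (pre₁ post₁ : E₁ → Finset B₁) (pre₂ post₂ : E₂ → Finset B₂)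
    (φ₁ : B₁ → ℕ) (φ₂ : B₂ → ℕ)
    (β : B ≃ B₁ ⊕ B₂) (η : E ≃ {p : Option E₁ × Option E₂ // p ≠ (none, none)})
    (hβφ : ∀ b : B, φ b = Sum.elim φ₁ φ₂ (β b))
    (hpre : ∀ e : E, ⇑β '' (↑(pre e) : Set B) =
      Sum.inl '' ↑(((η e).val.1).elim ∅ pre₁) ∪ Sum.inr '' ↑(((η e).val.2).elim ∅ pre₂))
    (hpost : ∀ e : E, ⇑β '' (↑(post e) : Set B) =
      Sum.inl '' ↑(((η e).val.1).elim ∅ post₁) ∪ Sum.inr '' ↑(((η e).val.2).elim ∅ post₂)) :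
    petriPoly pre post φ = petriPoly pre₁ post₁ φ₁ * petriPoly pre₂ post₂ φ₂ := by
  classical
  set T₁ : Option E₁ → MvPolynomial (Fin 2) ℕ := fun o =>
    MvPolynomial.X 0 ^ (∑ b ∈ o.elim ∅ pre₁, 2 ^ φ₁ b) *
    MvPolynomial.X 1 ^ (∑ b ∈ o.elim ∅ post₁, 2 ^ φ₁ b) with hT₁
  set T₂ : Option E₂ → MvPolynomial (Fin 2) ℕ := fun o =>
    MvPolynomial.X 0 ^ (∑ b ∈ o.elim ∅ pre₂, 2 ^ φ₂ b) *
    MvPolynomial.X 1 ^ (∑ b ∈ o.elim ∅ post₂, 2 ^ φ₂ b) with hT₂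
  set G : Option E₁ × Option E₂ → MvPolynomial (Fin 2) ℕ := fun p => T₁ p.1 * T₂ p.2 with hG
  have hGnn : G (none, none) = 1 := by simp [hG, hT₁, hT₂]
  have stepA : ∀ e : E,
      MvPolynomial.X 0 ^ (∑ b ∈ pre e, 2 ^ φ b) * MvPolynomial.X 1 ^ (∑ b ∈ post e, 2 ^ φ b)
      = G (η e).val := by
    intro e
    have h1 := sum_split_of_image φ φ₁ φ₂ β hβφ (pre e) _ _ (hpre e)
    have h2 := sum_split_of_image φ φ₁ φ₂ β hβφ (post e) _ _ (hpost e)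
    rw [h1, h2, hG, hT₁, hT₂]
    simp only []
    rw [pow_add, pow_add]
    ring
  have stepB : petriPoly pre post φ
      = 1 + ∑ p : {p : Option E₁ × Option E₂ // p ≠ (none, none)}, G p.val := by
    rw [petriPoly]
    congr 1
    rw [← Equiv.sum_comp η (fun p => G p.val)]
    exact Finset.sum_congr rfl fun e _ => stepA e
  have stepC : ∑ p : {p : Option E₁ × Option E₂ // p ≠ (none, none)}, G p.val
      = ∑ x ∈ (Finset.univ : Finset (Option E₁ × Option E₂)).erase (none, none), G x := by
    rw [← Finset.filter_ne' Finset.univ ((none, none) : Option E₁ × Option E₂)]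
    exact (Finset.sum_subtype _ (fun x => by simp) G).symm
  have stepD : petriPoly pre post φ = ∑ x : Option E₁ × Option E₂, G x := by
    rw [stepB, stepC, ← hGnn,
      Finset.add_sum_erase _ G (Finset.mem_univ ((none, none) : Option E₁ × Option E₂))]
  rw [stepD, Fintype.sum_prod_type]
  have stepE : ∑ x : Option E₁, ∑ y : Option E₂, G (x, y)
      = (∑ x : Option E₁, T₁ x) * (∑ y : Option E₂, T₂ y) := by
    rw [Finset.sum_mul_sum]
  rw [stepE, Fintype.sum_option, Fintype.sum_option]
  rw [petriPoly, petriPoly]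
  congr 1 <;> simp [hT₁, hT₂]

/-! ### forward direction: construction -/

section Forward

variable {B E : Type} [Fintype B] [Fintype E]

/-- the splitting predicate: conditions whose label-bit lies in `tauMv P₁` -/
def qP (φ : B → ℕ) (P₁ : MvPolynomial (Fin 2) ℕ) (b : B) : Prop := φ b ∈ tauMv P₁

/-- the abstract event type realizing a polynomial `P`:
one event for every nonconstant monomial counted with multiplicity, plus
`coeff 0 P - 1` idle events. -/
abbrev EF (P : MvPolynomial (Fin 2) ℕ) : Type :=
  ((d : {d : D // d ∈ P.support.erase 0}) × Fin (MvPolynomial.coeff d.val P)) ⊕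
  Fin (MvPolynomial.coeff 0 P - 1)

end Forward

lemma mem_tauMv_iff {P : MvPolynomial (Fin 2) ℕ} {t : ℕ} :
    t ∈ tauMv P ↔ ∃ d ∈ P.support, t ∈ mbits d := by
  rw [tauMv, Set.mem_iUnion₂]
  constructor
  · rintro ⟨d, hd, hm⟩
    refine ⟨d, hd, ?_⟩
    rcases hm with hm | hm
    · exact Finset.mem_union_left _ (by rwa [tau_eq_bits, Finset.mem_coe] at hm)
    · exact Finset.mem_union_right _ (by rwa [tau_eq_bits, Finset.mem_coe] at hm)
  · rintro ⟨d, hd, hm⟩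
    refine ⟨d, hd, ?_⟩
    rcases Finset.mem_union.1 hm with hm | hm
    · exact Or.inl (by rw [tau_eq_bits, Finset.mem_coe]; exact hm)
    · exact Or.inr (by rw [tau_eq_bits, Finset.mem_coe]; exact hm)

lemma ind_and {A C : Prop} [Decidable A] [Decidable C] :
    (if A ∧ C then (1 : ℕ) else 0) = (if A then 1 else 0) * (if C then 1 else 0) := by
  by_cases hA : A <;> by_cases hC : C <;> simp [hA, hC]

lemma d_add_eq_zero {x y : D} : x + y = 0 ↔ x = 0 ∧ y = 0 := by
  constructor
  · intro h
    constructor <;> ext i <;> (have := DFunLike.congr_fun h i; simp at this ⊢; omega)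
  · rintro ⟨rfl, rfl⟩; simp

section Forward2

variable {B E : Type} [Fintype B]

/-- conditions of the component net realizing the bit positions of `n` -/
def toBF (φ : B → ℕ) (r : B → Prop) [DecidablePred r] (n : ℕ) : Finset {b : B // r b} :=
  ((Finset.univ : Finset B).filter (fun b => φ b ∈ bits n)).subtype r

lemma mem_toBF {φ : B → ℕ} {r : B → Prop} [DecidablePred r] {n : ℕ} {b : {b : B // r b}} :
    b ∈ toBF φ r n ↔ φ b.val ∈ bits n := by
  simp [toBF]

def preF (φ : B → ℕ) (r : B → Prop) [DecidablePred r] (P : MvPolynomial (Fin 2) ℕ) :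
    EF P → Finset {b : B // r b}
  | Sum.inl x => toBF φ r (x.1.val 0)
  | Sum.inr _ => ∅

def postF (φ : B → ℕ) (r : B → Prop) [DecidablePred r] (P : MvPolynomial (Fin 2) ℕ) :
    EF P → Finset {b : B // r b}
  | Sum.inl x => toBF φ r (x.1.val 1)
  | Sum.inr _ => ∅

/-- the monomial exponent attached to an abstract event -/
def monF (P : MvPolynomial (Fin 2) ℕ) : EF P → D :=
  Sum.elim (fun x => x.1.val) (fun _ => 0)

variable {φ : B → ℕ} {r : B → Prop} [DecidablePred r] {P : MvPolynomial (Fin 2) ℕ}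

lemma sum_toBF (hφ : Function.Injective φ)
    (hsurjP : ∀ t ∈ tauMv P, ∃ b, r b ∧ φ b = t) {n : ℕ}
    (hn : ↑(bits n) ⊆ tauMv P) :
    ∑ b ∈ toBF φ r n, 2 ^ φ b.val = n := by
  classical
  have hinj : Function.Injective (fun b : {b : B // r b} => φ b.val) := by
    intro x y hxy
    exact Subtype.ext (hφ hxy)
  have himg : (toBF φ r n).image (fun b : {b : B // r b} => φ b.val) = bits n := by
    apply Finset.ext; intro t
    constructor
    · intro ht
      obtain ⟨b, hb, rfl⟩ := Finset.mem_image.1 ht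
      exact mem_toBF.1 hb
    · intro ht
      obtain ⟨b, hrb, rfl⟩ := hsurjP t (hn ht)
      exact Finset.mem_image.2 ⟨⟨b, hrb⟩, mem_toBF.2 ht, rfl⟩
  rw [sum_two_pow_image _ _ hinj, himg, sum_bits]

lemma dmE_monF (hφ : Function.Injective φ)
    (hsurjP : ∀ t ∈ tauMv P, ∃ b, r b ∧ φ b = t) (x : EF P) :
    dmE (preF φ r P) (postF φ r P) (fun b => φ b.val) x = monF P x := by
  cases x with
  | inl x =>
    have hd : x.1.val ∈ P.support := Finset.mem_of_mem_erase x.1.prop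
    have h0 := sum_toBF hφ hsurjP (bits0_subset (mbits_subset_tauMv hd))
    have h1 := sum_toBF hφ hsurjP (bits1_subset (mbits_subset_tauMv hd))
    show dm _ _ = x.1.val
    rw [preF, postF] at *
    rw [h0, h1, dm_self]
  | inr x =>
    show dm _ _ = 0
    rw [preF, postF]
    simp

lemma monF_bits (x : EF P) : ↑(mbits (monF P x)) ⊆ tauMv P := by
  cases x with
  | inl x => exact mbits_subset_tauMv (Finset.mem_of_mem_erase x.1.prop)
  | inr x => simp [monF]

lemma sum_ite_monF (P : MvPolynomial (Fin 2) ℕ) (a : D) :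
    ∑ x : EF P, (if monF P x = a then (1 : ℕ) else 0)
      = if a = 0 then MvPolynomial.coeff 0 P - 1 else MvPolynomial.coeff a P := by
  classical
  rw [Fintype.sum_sum_type]
  have hinr : ∑ x : Fin (MvPolynomial.coeff 0 P - 1),
      (if monF P (Sum.inr x) = a then (1 : ℕ) else 0)
      = if (0 : D) = a then MvPolynomial.coeff 0 P - 1 else 0 := by
    by_cases h : (0 : D) = a <;> simp [monF, h]
  have hinl : ∑ x : (d : {d : D // d ∈ P.support.erase 0}) × Fin (MvPolynomial.coeff d.val P),
      (if monF P (Sum.inl x) = a then (1 : ℕ) else 0)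
      = if a ∈ P.support.erase 0 then MvPolynomial.coeff a P else 0 := by
    rw [← Finset.univ_sigma_univ, Finset.sum_sigma]
    have hstep : ∀ d ∈ (Finset.univ : Finset {d : D // d ∈ P.support.erase 0}),
        ∑ _j : Fin (MvPolynomial.coeff d.val P),
          (if monF P (Sum.inl ⟨d, _j⟩) = a then (1:ℕ) else 0)
        = (fun d : {d : D // d ∈ P.support.erase 0} =>
            if d.val = a then MvPolynomial.coeff d.val P else 0) d := by
      intro d _
      by_cases h : d.val = a <;> simp [monF, h]
    rw [Finset.sum_congr rfl hstep]
    rw [← Finset.sum_subtype (P.support.erase 0) (fun x => Iff.rfl)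
      (fun d => if d = a then MvPolynomial.coeff d P else 0)]
    rw [Finset.sum_ite_eq' (P.support.erase 0) a (fun d => MvPolynomial.coeff d P)]
  rw [hinl, hinr]
  by_cases ha : a = 0
  · subst ha
    simp
  · by_cases hs : a ∈ P.support
    · simp [ha, Finset.mem_erase.2 ⟨ha, hs⟩, Ne.symm ha]
    · have h2 : ¬ a ∈ P.support.erase 0 := fun hc => hs (Finset.mem_of_mem_erase hc)
      rw [MvPolynomial.notMem_support_iff] at hs
      simp [ha, h2, Ne.symm ha, hs]

lemma coeff_petriPolyF (hφ : Function.Injective φ)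
    (hsurjP : ∀ t ∈ tauMv P, ∃ b, r b ∧ φ b = t)
    (hc0 : 1 ≤ MvPolynomial.coeff 0 P) :
    petriPoly (preF φ r P) (postF φ r P) (fun b => φ b.val) = P := by
  classical
  apply MvPolynomial.ext
  intro a
  rw [coeff_petriPoly]
  have : ∀ x : EF P, (if dmE (preF φ r P) (postF φ r P) (fun b => φ b.val) x = a then (1:ℕ) else 0)
      = (if monF P x = a then 1 else 0) := by
    intro x; rw [dmE_monF hφ hsurjP]
  rw [Fintype.sum_congr _ _ this, sum_ite_monF]
  by_cases ha : a = 0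
  · subst ha; simp; omega
  · simp [ha]

lemma covF (hr : ∀ b, r b → φ b ∈ tauMv P) (b₁ : {b : B // r b}) :
    ∃ x : EF P, b₁ ∈ preF φ r P x ∨ b₁ ∈ postF φ r P x := by
  obtain ⟨d, hd, hm⟩ := mem_tauMv_iff.1 (hr b₁.val b₁.prop)
  have hd0 : d ≠ 0 := by
    intro h; subst h; simp [mbits_zero] at hm
  have hpos : 0 < MvPolynomial.coeff d P := Nat.pos_of_ne_zero (MvPolynomial.mem_support_iff.1 hd)
  refine ⟨Sum.inl ⟨⟨d, Finset.mem_erase.2 ⟨hd0, hd⟩⟩, ⟨0, hpos⟩⟩, ?_⟩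
  rcases Finset.mem_union.1 hm with hm | hm
  · exact Or.inl (by rw [preF]; exact mem_toBF.2 hm)
  · exact Or.inr (by rw [postF]; exact mem_toBF.2 hm)

lemma opt_sum_preF (hφ : Function.Injective φ)
    (hsurjP : ∀ t ∈ tauMv P, ∃ b, r b ∧ φ b = t) (o : Option (EF P)) :
    ∑ b ∈ o.elim ∅ (preF φ r P), 2 ^ φ b.val = (o.elim 0 (monF P)) 0 := by
  cases o with
  | none => simp
  | some x =>
    cases x with
    | inl x =>
      show ∑ b ∈ toBF φ r (x.1.val 0), 2 ^ φ b.val = x.1.val 0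
      exact sum_toBF hφ hsurjP (bits0_subset (mbits_subset_tauMv (Finset.mem_of_mem_erase x.1.prop)))
    | inr x =>
      show ∑ b ∈ (∅ : Finset {b : B // r b}), 2 ^ φ b.val = (0 : D) 0
      simp

lemma opt_sum_postF (hφ : Function.Injective φ)
    (hsurjP : ∀ t ∈ tauMv P, ∃ b, r b ∧ φ b = t) (o : Option (EF P)) :
    ∑ b ∈ o.elim ∅ (postF φ r P), 2 ^ φ b.val = (o.elim 0 (monF P)) 1 := by
  cases o with
  | none => simp
  | some x =>
    cases x with
    | inl x =>
      show ∑ b ∈ toBF φ r (x.1.val 1), 2 ^ φ b.val = x.1.val 1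
      exact sum_toBF hφ hsurjP (bits1_subset (mbits_subset_tauMv (Finset.mem_of_mem_erase x.1.prop)))
    | inr x =>
      show ∑ b ∈ (∅ : Finset {b : B // r b}), 2 ^ φ b.val = (0 : D) 1
      simp

/-- the part of the monomial of an event supported on conditions satisfying `r` -/
noncomputable def mE (φ : B → ℕ) (r : B → Prop) [DecidablePred r]
    (pre post : E → Finset B) (e : E) : D :=
  dm (∑ b ∈ (pre e).filter r, 2 ^ φ b) (∑ b ∈ (post e).filter r, 2 ^ φ b)

lemma mE_apply0 (pre post : E → Finset B) (e : E) :
    mE φ r pre post e 0 = ∑ b ∈ (pre e).filter r, 2 ^ φ b := by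
  rw [mE, dm_apply0]

lemma mE_apply1 (pre post : E → Finset B) (e : E) :
    mE φ r pre post e 1 = ∑ b ∈ (post e).filter r, 2 ^ φ b := by
  rw [mE, dm_apply1]

lemma mbits_mE_subset {S : Set ℕ} (hφ : Function.Injective φ)
    (hrS : ∀ b, r b → φ b ∈ S) (pre post : E → Finset B) (e : E) :
    ↑(mbits (mE φ r pre post e)) ⊆ S := by
  intro t ht
  rw [Finset.mem_coe, mbits, mE_apply0, mE_apply1, bits_sum_two_pow _ φ hφ,
    bits_sum_two_pow _ φ hφ] at ht
  rcases Finset.mem_union.1 ht with ht | ht <;>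
  · obtain ⟨b, hb, rfl⟩ := Finset.mem_image.1 ht
    exact hrS b (Finset.mem_filter.1 hb).2

lemma dmE_split (φ : B → ℕ) (r : B → Prop) [DecidablePred r]
    (pre post : E → Finset B) (e : E) :
    dmE pre post φ e = mE φ r pre post e + mE φ (fun b => ¬ r b) pre post e := by
  rw [dmE, mE, mE, ← dm_add,
    Finset.sum_filter_add_sum_filter_not (pre e) r, Finset.sum_filter_add_sum_filter_not (post e) r]

lemma image_sumCompl (q : B → Prop) [DecidablePred q] (s : Finset B) :
    ⇑(Equiv.sumCompl q).symm '' ↑s =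
      Sum.inl '' ↑(s.subtype q) ∪ Sum.inr '' ↑(s.subtype fun b => ¬ q b) := by
  ext x
  constructor
  · rintro ⟨b, hb, rfl⟩
    by_cases hq : q b
    · rw [Equiv.sumCompl_symm_apply_of_pos (p := q) (a := b) hq]
      exact Or.inl ⟨⟨b, hq⟩, Finset.mem_coe.2 (Finset.mem_subtype.2 hb), rfl⟩
    · rw [Equiv.sumCompl_symm_apply_of_neg (p := q) (a := b) hq]
      exact Or.inr ⟨⟨b, hq⟩, Finset.mem_coe.2 (Finset.mem_subtype.2 hb), rfl⟩
  · rintro (⟨b₁, hb₁, rfl⟩ | ⟨b₂, hb₂, rfl⟩)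
    · refine ⟨b₁.val, Finset.mem_coe.2 (Finset.mem_subtype.1 (Finset.mem_coe.1 hb₁)), ?_⟩
      rw [Equiv.sumCompl_symm_apply_of_pos (p := q) (a := b₁.val) b₁.prop]
    · refine ⟨b₂.val, Finset.mem_coe.2 (Finset.mem_subtype.1 (Finset.mem_coe.1 hb₂)), ?_⟩
      rw [Equiv.sumCompl_symm_apply_of_neg (p := q) (a := b₂.val) b₂.prop]

end Forward2

set_option maxHeartbeats 1000000 in
lemma forward {B E : Type} [Fintype B] [Fintype E]
    (pre post : E → Finset B) (φ : B → ℕ) (hφ : Function.Injective φ)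
    (hcov : ∀ b : B, ∃ e : E, b ∈ pre e ∨ b ∈ post e)
    (P₁ P₂ : MvPolynomial (Fin 2) ℕ)
    (hdis : Disjoint (tauMv P₁) (tauMv P₂))
    (h : petriPoly pre post φ = P₁ * P₂) :
    ∃ (B₁ E₁ B₂ E₂ : Type) (_ : Fintype B₁) (iE₁ : Fintype E₁)
      (_ : Fintype B₂) (iE₂ : Fintype E₂)
      (pre₁ post₁ : E₁ → Finset B₁) (pre₂ post₂ : E₂ → Finset B₂)
      (φ₁ : B₁ → ℕ) (φ₂ : B₂ → ℕ),
      Function.Injective φ₁ ∧ Function.Injective φ₂ ∧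
      Disjoint (Set.range φ₁) (Set.range φ₂) ∧
      (∀ b₁ : B₁, ∃ e₁ : E₁, b₁ ∈ pre₁ e₁ ∨ b₁ ∈ post₁ e₁) ∧
      (∀ b₂ : B₂, ∃ e₂ : E₂, b₂ ∈ pre₂ e₂ ∨ b₂ ∈ post₂ e₂) ∧
      @petriPoly B₁ E₁ iE₁ pre₁ post₁ φ₁ = P₁ ∧
      @petriPoly B₂ E₂ iE₂ pre₂ post₂ φ₂ = P₂ ∧
      ∃ (β : B ≃ B₁ ⊕ B₂)
        (η : E ≃ {p : Option E₁ × Option E₂ // p ≠ (none, none)}),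
        (∀ b : B, φ b = Sum.elim φ₁ φ₂ (β b)) ∧
        (∀ e : E, ⇑β '' (↑(pre e) : Set B) =
          Sum.inl '' ↑(((η e).val.1).elim ∅ pre₁) ∪
          Sum.inr '' ↑(((η e).val.2).elim ∅ pre₂)) ∧
        (∀ e : E, ⇑β '' (↑(post e) : Set B) =
          Sum.inl '' ↑(((η e).val.1).elim ∅ post₁) ∪
          Sum.inr '' ↑(((η e).val.2).elim ∅ post₂)) := by
  classical
  -- basic coefficient identity
  have hco : ∀ d : D, MvPolynomial.coeff d (P₁ * P₂)
      = (if d = 0 then 1 else 0) + ∑ e : E, (if dmE pre post φ e = d then 1 else 0) := by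
    intro d; rw [← h, coeff_petriPoly]
  -- every event monomial is in the support of the product
  have hdme_supp : ∀ e : E, dmE pre post φ e ∈ (P₁ * P₂).support := by
    intro e
    rw [MvPolynomial.mem_support_iff, hco]
    have h1 : (1:ℕ) ≤ ∑ e' : E, (if dmE pre post φ e' = dmE pre post φ e then 1 else 0) := by
      have := Finset.single_le_sum
        (f := fun e' => if dmE pre post φ e' = dmE pre post φ e then (1:ℕ) else 0)
        (fun i _ => Nat.zero_le _) (Finset.mem_univ e)
      simpa using this
    omega
  -- every condition's label bit lies in τ₁ ∪ τ₂
  have hcond : ∀ b : B, φ b ∈ tauMv P₁ ∪ tauMv P₂ := by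
    intro b
    obtain ⟨e, hbe⟩ := hcov b
    have hsub := support_mul_bits hdis (hdme_supp e)
    apply hsub
    have hmem : φ b ∈ mbits (dmE pre post φ e) := by
      rw [mbits, dmE, dm_apply0, dm_apply1, bits_sum_two_pow _ φ hφ, bits_sum_two_pow _ φ hφ]
      rcases hbe with hb | hb
      · exact Finset.mem_union_left _ (Finset.mem_image_of_mem φ hb)
      · exact Finset.mem_union_right _ (Finset.mem_image_of_mem φ hb)
    exact Finset.mem_coe.2 hmem
  have hq2 : ∀ b, ¬ qP φ P₁ b → φ b ∈ tauMv P₂ := by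
    intro b hb
    rcases hcond b with hc | hc
    · exact absurd hc hb
    · exact hc
  -- constant coefficients
  have hc00 : MvPolynomial.coeff 0 (P₁ * P₂)
      = MvPolynomial.coeff 0 P₁ * MvPolynomial.coeff 0 P₂ := by
    have := coeff_mul_of_disjoint hdis (a := 0) (b := 0) (by simp) (by simp)
    simpa using this
  have hcpos : 0 < MvPolynomial.coeff 0 P₁ * MvPolynomial.coeff 0 P₂ := by
    rw [← hc00, hco 0]
    simp
  have hc10 : 1 ≤ MvPolynomial.coeff 0 P₁ := by
    rcases Nat.eq_zero_or_pos (MvPolynomial.coeff 0 P₁) with h0 | h0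
    · rw [h0, zero_mul] at hcpos; omega
    · exact h0
  have hc20 : 1 ≤ MvPolynomial.coeff 0 P₂ := by
    rcases Nat.eq_zero_or_pos (MvPolynomial.coeff 0 P₂) with h0 | h0
    · rw [h0, mul_zero] at hcpos; omega
    · exact h0
  -- surjectivity onto the bit positions
  have hsupp_ne₁ : ∀ d ∈ P₁.support, MvPolynomial.coeff d (P₁ * P₂) ≠ 0 := by
    intro d hd
    have hh : MvPolynomial.coeff (d + 0) (P₁ * P₂)
        = MvPolynomial.coeff d P₁ * MvPolynomial.coeff 0 P₂ :=
      coeff_mul_of_disjoint hdis (mbits_subset_tauMv hd) (by simp)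
    rw [add_zero] at hh
    rw [hh]
    exact Nat.mul_ne_zero (MvPolynomial.mem_support_iff.1 hd) (by omega)
  have hsupp_ne₂ : ∀ d ∈ P₂.support, MvPolynomial.coeff d (P₁ * P₂) ≠ 0 := by
    intro d hd
    have hh : MvPolynomial.coeff ((0 : D) + d) (P₁ * P₂)
        = MvPolynomial.coeff 0 P₁ * MvPolynomial.coeff d P₂ :=
      coeff_mul_of_disjoint hdis (by simp) (mbits_subset_tauMv hd)
    rw [zero_add] at hh
    rw [hh]
    exact Nat.mul_ne_zero (by omega) (MvPolynomial.mem_support_iff.1 hd)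
  have hevent_of_supp : ∀ {d : D}, d ≠ 0 → MvPolynomial.coeff d (P₁ * P₂) ≠ 0 →
      ∃ e : E, dmE pre post φ e = d := by
    intro d hd0 hd
    rw [hco d] at hd
    have hsum : ∑ e : E, (if dmE pre post φ e = d then (1:ℕ) else 0) ≠ 0 := by
      simpa [hd0] using hd
    obtain ⟨e, _, he⟩ := Finset.exists_ne_zero_of_sum_ne_zero hsum
    refine ⟨e, ?_⟩
    by_contra hne
    simp [hne] at he
  have hsurj1 : ∀ t ∈ tauMv P₁, ∃ b, qP φ P₁ b ∧ φ b = t := by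
    intro t ht
    obtain ⟨d, hd, hm⟩ := mem_tauMv_iff.1 ht
    have hd0 : d ≠ 0 := by rintro rfl; simp [mbits_zero] at hm
    obtain ⟨e, hde⟩ := hevent_of_supp hd0 (hsupp_ne₁ d hd)
    rw [← hde, mbits, dmE, dm_apply0, dm_apply1, bits_sum_two_pow _ φ hφ,
      bits_sum_two_pow _ φ hφ] at hm
    rcases Finset.mem_union.1 hm with hm | hm <;>
    · obtain ⟨b, _, rfl⟩ := Finset.mem_image.1 hm
      exact ⟨b, ht, rfl⟩
  have hsurj2 : ∀ t ∈ tauMv P₂, ∃ b, (¬ qP φ P₁ b) ∧ φ b = t := by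
    intro t ht
    obtain ⟨d, hd, hm⟩ := mem_tauMv_iff.1 ht
    have hd0 : d ≠ 0 := by rintro rfl; simp [mbits_zero] at hm
    obtain ⟨e, hde⟩ := hevent_of_supp hd0 (hsupp_ne₂ d hd)
    rw [← hde, mbits, dmE, dm_apply0, dm_apply1, bits_sum_two_pow _ φ hφ,
      bits_sum_two_pow _ φ hφ] at hm
    rcases Finset.mem_union.1 hm with hm | hm <;>
    · obtain ⟨b, _, rfl⟩ := Finset.mem_image.1 hm
      exact ⟨b, fun hq => Set.disjoint_left.1 hdis hq ht, rfl⟩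
  -- the components
  set r₁ : B → Prop := qP φ P₁ with hr₁
  set r₂ : B → Prop := fun b => ¬ qP φ P₁ b with hr₂
  have hpp₁ : petriPoly (preF φ r₁ P₁) (postF φ r₁ P₁) (fun b => φ b.val) = P₁ :=
    coeff_petriPolyF hφ hsurj1 hc10
  have hpp₂ : petriPoly (preF φ r₂ P₂) (postF φ r₂ P₂) (fun b => φ b.val) = P₂ :=
    coeff_petriPolyF hφ hsurj2 hc20
  have hinj₁ : Function.Injective (fun b : {b : B // r₁ b} => φ b.val) :=
    fun x y hxy => Subtype.ext (hφ hxy)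
  have hinj₂ : Function.Injective (fun b : {b : B // r₂ b} => φ b.val) :=
    fun x y hxy => Subtype.ext (hφ hxy)
  -- fibers and the event bijection
  set f : E → D × D := fun e => (mE φ r₁ pre post e, mE φ r₂ pre post e) with hf
  set g : Option (EF P₁) × Option (EF P₂) → D × D :=
    fun p => (p.1.elim 0 (monF P₁), p.2.elim 0 (monF P₂)) with hg
  have hm₁bits : ∀ e, ↑(mbits (mE φ r₁ pre post e)) ⊆ tauMv P₁ :=
    mbits_mE_subset hφ (fun b hb => hb) pre post
  have hm₂bits : ∀ e, ↑(mbits (mE φ r₂ pre post e)) ⊆ tauMv P₂ :=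
    mbits_mE_subset hφ hq2 pre post
  have hsplitdm : ∀ e, dmE pre post φ e = mE φ r₁ pre post e + mE φ r₂ pre post e :=
    fun e => dmE_split φ r₁ pre post e
  have hopt₁ : ∀ a : D, ∑ o : Option (EF P₁), (if o.elim 0 (monF P₁) = a then (1:ℕ) else 0)
      = MvPolynomial.coeff a P₁ := by
    intro a
    rw [Fintype.sum_option]
    show (if (0 : D) = a then (1:ℕ) else 0) + _ = _
    simp only [Option.elim_some]
    erw [sum_ite_monF]
    by_cases ha : a = 0
    · subst ha; simp; omega
    · simp [ha, Ne.symm ha]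
  have hopt₂ : ∀ a : D, ∑ o : Option (EF P₂), (if o.elim 0 (monF P₂) = a then (1:ℕ) else 0)
      = MvPolynomial.coeff a P₂ := by
    intro a
    rw [Fintype.sum_option]
    show (if (0 : D) = a then (1:ℕ) else 0) + _ = _
    simp only [Option.elim_some]
    erw [sum_ite_monF]
    by_cases ha : a = 0
    · subst ha; simp; omega
    · simp [ha, Ne.symm ha]
  have hOO : ∀ s : D × D, ∑ p : Option (EF P₁) × Option (EF P₂), (if g p = s then (1:ℕ) else 0)
      = MvPolynomial.coeff s.1 P₁ * MvPolynomial.coeff s.2 P₂ := by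
    intro s
    rw [Fintype.sum_prod_type]
    have hsplit : ∀ (o₁ : Option (EF P₁)) (o₂ : Option (EF P₂)),
        (if g (o₁, o₂) = s then (1:ℕ) else 0)
        = (if o₁.elim 0 (monF P₁) = s.1 then (1:ℕ) else 0)
          * (if o₂.elim 0 (monF P₂) = s.2 then (1:ℕ) else 0) := by
      intro o₁ o₂
      rw [← ind_and]
      exact if_congr Prod.ext_iff rfl rfl
    simp_rw [hsplit]
    rw [← Finset.sum_mul_sum]
    rw [hopt₁, hopt₂]
  -- cardinality of the event fibers
  have cardE : ∀ s : D × D, (if ((0:D), (0:D)) = s then (1:ℕ) else 0)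
      + Fintype.card {e : E // f e = s}
      = MvPolynomial.coeff s.1 P₁ * MvPolynomial.coeff s.2 P₂ := by
    intro s
    by_cases hgood : ↑(mbits s.1) ⊆ tauMv P₁ ∧ ↑(mbits s.2) ⊆ tauMv P₂
    · have hiff : ∀ e, f e = s ↔ dmE pre post φ e = s.1 + s.2 := by
        intro e
        constructor
        · intro heq
          rw [hsplitdm e]
          have h1 : mE φ r₁ pre post e = s.1 := congrArg Prod.fst heq
          have h2 : mE φ r₂ pre post e = s.2 := congrArg Prod.snd heq
          rw [h1, h2]
        · intro heq
          rw [hsplitdm e] at heq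
          have h0 : mE φ r₁ pre post e 0 + mE φ r₂ pre post e 0 = s.1 0 + s.2 0 := by
            have := DFunLike.congr_fun heq 0; simpa using this
          have h1 : mE φ r₁ pre post e 1 + mE φ r₂ pre post e 1 = s.1 1 + s.2 1 := by
            have := DFunLike.congr_fun heq 1; simpa using this
          have e0 := add_cancel_bits hdis (bits0_subset (hm₁bits e)) (bits0_subset (hm₂bits e))
            (bits0_subset hgood.1) (bits0_subset hgood.2) h0
          have e1 := add_cancel_bits hdis (bits1_subset (hm₁bits e)) (bits1_subset (hm₂bits e))
            (bits1_subset hgood.1) (bits1_subset hgood.2) h1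
          have hA : mE φ r₁ pre post e = s.1 := by
            rw [← dm_self (mE φ r₁ pre post e), ← dm_self s.1, e0.1, e1.1]
          have hB : mE φ r₂ pre post e = s.2 := by
            rw [← dm_self (mE φ r₂ pre post e), ← dm_self s.2, e0.2, e1.2]
          rw [hf]
          rw [Prod.ext_iff]
          exact ⟨hA, hB⟩
      have hcard : Fintype.card {e : E // f e = s}
          = ∑ e : E, (if dmE pre post φ e = s.1 + s.2 then (1:ℕ) else 0) := by
        rw [Fintype.card_subtype, Finset.card_filter]
        exact Finset.sum_congr rfl (fun e _ => by rw [if_congr (hiff e) rfl rfl])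
      rw [hcard]
      have hcm := coeff_mul_of_disjoint hdis hgood.1 hgood.2
      rw [← hcm, hco (s.1 + s.2)]
      congr 1
      apply if_congr _ rfl rfl
      rw [d_add_eq_zero, Prod.ext_iff]
      constructor
      · rintro ⟨h1, h2⟩; exact ⟨h1.symm, h2.symm⟩
      · rintro ⟨h1, h2⟩; exact ⟨h1.symm, h2.symm⟩
    · have h1 : Fintype.card {e : E // f e = s} = 0 := by
        rw [Fintype.card_eq_zero_iff]
        refine ⟨fun x => ?_⟩
        obtain ⟨e, he⟩ := x
        apply hgood
        rw [← he]
        exact ⟨hm₁bits e, hm₂bits e⟩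
      have h2 : MvPolynomial.coeff s.1 P₁ * MvPolynomial.coeff s.2 P₂ = 0 := by
        rcases not_and_or.1 hgood with hbad | hbad
        · have hns : s.1 ∉ P₁.support := fun hc => hbad (mbits_subset_tauMv hc)
          rw [MvPolynomial.notMem_support_iff.1 hns, zero_mul]
        · have hns : s.2 ∉ P₂.support := fun hc => hbad (mbits_subset_tauMv hc)
          rw [MvPolynomial.notMem_support_iff.1 hns, mul_zero]
      have h3 : ((0:D), (0:D)) ≠ s := by
        rintro rfl
        exact hgood ⟨by simp, by simp⟩
      rw [h1, h2, if_neg h3]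
  -- cardinality of the pair fibers
  have cardP : ∀ s : D × D, (if ((0:D), (0:D)) = s then (1:ℕ) else 0)
      + Fintype.card {p : {p : Option (EF P₁) × Option (EF P₂) // p ≠ (none, none)} // g p.val = s}
      = MvPolynomial.coeff s.1 P₁ * MvPolynomial.coeff s.2 P₂ := by
    intro s
    rw [← hOO s, Fintype.card_subtype, Finset.card_filter]
    have hsub : ∑ p : {p : Option (EF P₁) × Option (EF P₂) // p ≠ (none, none)},
        (if g p.val = s then (1:ℕ) else 0)
        = ∑ x ∈ (Finset.univ.erase ((none, none) : Option (EF P₁) × Option (EF P₂))),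
            (if g x = s then (1:ℕ) else 0) := by
      rw [← Finset.filter_ne' Finset.univ ((none, none) : Option (EF P₁) × Option (EF P₂))]
      exact (Finset.sum_subtype
        (Finset.univ.filter (fun p : Option (EF P₁) × Option (EF P₂) => p ≠ (none, none)))
        (fun x => by simp) (fun x => if g x = s then (1:ℕ) else 0)).symm
    rw [hsub]
    have hins := Finset.add_sum_erase Finset.univ
      (fun x : Option (EF P₁) × Option (EF P₂) => if g x = s then (1:ℕ) else 0)
      (Finset.mem_univ ((none, none) : Option (EF P₁) × Option (EF P₂)))
    rw [← hins]
    congr 1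
  have hcards : ∀ s : D × D, Fintype.card {e : E // f e = s}
      = Fintype.card {p : {p : Option (EF P₁) × Option (EF P₂) // p ≠ (none, none)} // g p.val = s} := by
    intro s
    have a := cardE s
    have b := cardP s
    rw [← b] at a
    exact Nat.add_left_cancel a
  set η : E ≃ {p : Option (EF P₁) × Option (EF P₂) // p ≠ (none, none)} :=
    Equiv.ofFiberEquiv (f := f)
      (g := fun p : {p : Option (EF P₁) × Option (EF P₂) // p ≠ (none, none)} => g p.val)
      (fun s => Fintype.equivOfCardEq (hcards s)) with hη
  have hηmap : ∀ e : E, g (η e).val = f e := by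
    intro e
    rw [hη]
    exact Equiv.ofFiberEquiv_map (fun s => Fintype.equivOfCardEq (hcards s)) e
  -- assembling
  refine ⟨{b : B // r₁ b}, EF P₁, {b : B // r₂ b}, EF P₂,
    inferInstance, inferInstance, inferInstance, inferInstance,
    preF φ r₁ P₁, postF φ r₁ P₁, preF φ r₂ P₂, postF φ r₂ P₂,
    (fun b => φ b.val), (fun b => φ b.val),
    hinj₁, hinj₂, ?_, ?_, ?_, hpp₁, hpp₂,
    (Equiv.sumCompl r₁).symm, η, ?_, ?_, ?_⟩
  · -- disjoint ranges
    rw [Set.disjoint_left]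
    rintro x ⟨b₁, rfl⟩ ⟨b₂, hb2⟩
    apply b₂.prop
    show φ b₂.val ∈ tauMv P₁
    have hbb : φ b₂.val = φ b₁.val := hb2
    rw [hbb]
    exact b₁.prop
  · exact fun b₁ => covF (fun b hb => hb) b₁
  · exact fun b₂ => covF hq2 b₂
  · -- labels
    intro b
    by_cases hb : r₁ b
    · rw [Equiv.sumCompl_symm_apply_of_pos (p := r₁) (a := b) hb]
      rfl
    · rw [Equiv.sumCompl_symm_apply_of_neg (p := r₁) (a := b) hb]
      rfl
  · -- pre
    intro e
    have hcomp1 : (η e).val.1.elim 0 (monF P₁) = mE φ r₁ pre post e :=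
      congrArg Prod.fst (hηmap e)
    have hcomp2 : (η e).val.2.elim 0 (monF P₂) = mE φ r₂ pre post e :=
      congrArg Prod.snd (hηmap e)
    have hpre1 : ((η e).val.1).elim ∅ (preF φ r₁ P₁) = (pre e).subtype r₁ := by
      apply sum_two_pow_injective _ hinj₁
      rw [opt_sum_preF hφ hsurj1, hcomp1, mE_apply0]
      exact (Finset.sum_subtype_eq_sum_filter (fun b => 2 ^ φ b) (p := r₁)).symm
    have hpre2 : ((η e).val.2).elim ∅ (preF φ r₂ P₂) = (pre e).subtype r₂ := by
      apply sum_two_pow_injective _ hinj₂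
      rw [opt_sum_preF hφ hsurj2, hcomp2, mE_apply0]
      exact (Finset.sum_subtype_eq_sum_filter (fun b => 2 ^ φ b) (p := r₂)).symm
    rw [image_sumCompl r₁ (pre e), hpre1, hpre2]
  · -- post
    intro e
    have hcomp1 : (η e).val.1.elim 0 (monF P₁) = mE φ r₁ pre post e :=
      congrArg Prod.fst (hηmap e)
    have hcomp2 : (η e).val.2.elim 0 (monF P₂) = mE φ r₂ pre post e :=
      congrArg Prod.snd (hηmap e)
    have hpost1 : ((η e).val.1).elim ∅ (postF φ r₁ P₁) = (post e).subtype r₁ := by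
      apply sum_two_pow_injective _ hinj₁
      rw [opt_sum_postF hφ hsurj1, hcomp1, mE_apply1]
      exact (Finset.sum_subtype_eq_sum_filter (fun b => 2 ^ φ b) (p := r₁)).symm
    have hpost2 : ((η e).val.2).elim ∅ (postF φ r₂ P₂) = (post e).subtype r₂ := by
      apply sum_two_pow_injective _ hinj₂
      rw [opt_sum_postF hφ hsurj2, hcomp2, mE_apply1]
      exact (Finset.sum_subtype_eq_sum_filter (fun b => 2 ^ φ b) (p := r₂)).symm
    rw [image_sumCompl r₁ (post e), hpost1, hpost2]

end PetriAux

theorem petri_decomposition_criterion {B E : Type} [Fintype B] [Fintype E]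
    (pre post : E → Finset B) (φ : B → ℕ) (hφ : Function.Injective φ)
    (hcov : ∀ b : B, ∃ e : E, b ∈ pre e ∨ b ∈ post e)
    (P₁ P₂ : MvPolynomial (Fin 2) ℕ)
    (hτ : tauMv P₁ ∩ tauMv P₂ = ∅) :
    petriPoly pre post φ = P₁ * P₂ ↔
    ∃ (B₁ E₁ B₂ E₂ : Type) (_ : Fintype B₁) (iE₁ : Fintype E₁)
      (_ : Fintype B₂) (iE₂ : Fintype E₂)
      (pre₁ post₁ : E₁ → Finset B₁) (pre₂ post₂ : E₂ → Finset B₂)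
      (φ₁ : B₁ → ℕ) (φ₂ : B₂ → ℕ),
      Function.Injective φ₁ ∧ Function.Injective φ₂ ∧
      Disjoint (Set.range φ₁) (Set.range φ₂) ∧
      (∀ b₁ : B₁, ∃ e₁ : E₁, b₁ ∈ pre₁ e₁ ∨ b₁ ∈ post₁ e₁) ∧
      (∀ b₂ : B₂, ∃ e₂ : E₂, b₂ ∈ pre₂ e₂ ∨ b₂ ∈ post₂ e₂) ∧
      @petriPoly B₁ E₁ iE₁ pre₁ post₁ φ₁ = P₁ ∧
      @petriPoly B₂ E₂ iE₂ pre₂ post₂ φ₂ = P₂ ∧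
      ∃ (β : B ≃ B₁ ⊕ B₂)
        (η : E ≃ {p : Option E₁ × Option E₂ // p ≠ (none, none)}),
        (∀ b : B, φ b = Sum.elim φ₁ φ₂ (β b)) ∧
        (∀ e : E, ⇑β '' (↑(pre e) : Set B) =
          Sum.inl '' ↑(((η e).val.1).elim ∅ pre₁) ∪
          Sum.inr '' ↑(((η e).val.2).elim ∅ pre₂)) ∧
        (∀ e : E, ⇑β '' (↑(post e) : Set B) =
          Sum.inl '' ↑(((η e).val.1).elim ∅ post₁) ∪
          Sum.inr '' ↑(((η e).val.2).elim ∅ post₂)) := by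
  constructor
  · intro h
    exact PetriAux.forward pre post φ hφ hcov P₁ P₂ (Set.disjoint_iff_inter_eq_empty.2 hτ) h
  · rintro ⟨B₁, E₁, B₂, E₂, iB₁, iE₁, iB₂, iE₂, pre₁, post₁, pre₂, post₂, φ₁, φ₂,
      _, _, _, _, _, hP₁, hP₂, β, η, hβφ, hpre, hpost⟩
    rw [← hP₁, ← hP₂]
    exact PetriAux.backward_eq pre post φ pre₁ post₁ pre₂ post₂ φ₁ φ₂ β η hβφ hpre hpost
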